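/- (Parallel translation for $C^1$-close curves in $\mathbb{H}^3$.) Let $c, c_0 : [0,L] \to \mathscr{D}$ be piecewise $C^1$ curves in the matrix model of hyperbolic 3-space with unit parallel vector fields $v(t), v_0(t)$ along them (parallel for $\dot v = \frac{1}{2}[\dot c c^{-1}, v]$, $\dot v_0 = \frac{1}{2}[\dot c_0 c_0^{-1}, v_0]$). Suppose $\max_{0 \le t \le L} \| \dot c c^{-1} - \dot c_0 c_0^{-1} \|_{c_0(t)} < \varepsilon$ with $0 < \varepsilon \le 1/(4L)$. Then $\max_{0 \le t \le L} \| v(t) - v_0(t) \|_{c_0(t)} \le 2 \| v(0) - v_0(0) \|_{c_0(0)} + 4 L \varepsilon$. -/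

import Mathlib

open Matrix
open scoped ComplexOrder

attribute [local instance] Matrix.frobeniusNormedAddCommGroup Matrix.frobeniusNormedRing
  Matrix.frobeniusNormedSpace

/-- Membership in the matrix model `𝒟` of hyperbolic 3-space. -/
def memD (h : Matrix (Fin 2) (Fin 2) ℂ) : Prop :=
  h.IsHermitian ∧ h.det = 1 ∧ h.PosDef

/-- The norm `‖M‖_h` with `‖M‖_h² = ½ tr (M h Mᴴ h⁻¹)` for `h ∈ 𝒟` and traceless `M`. -/
noncomputable def hNorm (h M : Matrix (Fin 2) (Fin 2) ℂ) : ℝ :=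
  Real.sqrt (((2 : ℂ)⁻¹ * (M * h * Mᴴ * h⁻¹).trace).re)

namespace Stmt9Aux

abbrev M2 := Matrix (Fin 2) (Fin 2) ℂ

noncomputable instance : NormedAlgebra ℝ M2 :=
  { (inferInstance : Algebra ℝ M2) with
    norm_smul_le := fun r x => (norm_smul r x).le }

/-- conjTranspose as a real-linear continuous map -/
noncomputable def ctCLM : M2 →L[ℝ] M2 :=
  LinearMap.toContinuousLinearMap
    { toFun := fun A => Aᴴ
      map_add' := fun A B => Matrix.conjTranspose_add A B
      map_smul' := fun r A => by
        ext i j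
        simp [Matrix.conjTranspose_apply, Matrix.smul_apply, star_smul] }

@[simp] lemma ctCLM_apply (A : M2) : ctCLM A = Aᴴ := rfl

/-- `A ↦ tr(A) • 1 - A` (the adjugate, for 2×2) as a real-linear continuous map -/
noncomputable def adjCLM : M2 →L[ℝ] M2 :=
  LinearMap.toContinuousLinearMap
    { toFun := fun A => A.trace • (1 : M2) - A
      map_add' := fun A B => by simp [Matrix.trace_add, add_smul]; abel
      map_smul' := fun r A => by
        simp only [Matrix.trace_smul, RingHom.id_apply, smul_sub]
        congr 1
        rw [smul_assoc] }

lemma adjCLM_eq (A : M2) : adjCLM A = A.adjugate := by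
  rw [Matrix.adjugate_fin_two]
  show A.trace • (1 : M2) - A = _
  ext i j
  fin_cases i <;> fin_cases j <;>
    · simp [Matrix.trace_fin_two, Matrix.one_apply, Matrix.smul_apply]
      try ring

/-- `A ↦ re (½ tr A)` as a real-linear continuous map -/
noncomputable def trRe2 : M2 →L[ℝ] ℝ :=
  LinearMap.toContinuousLinearMap
    { toFun := fun A => ((2 : ℂ)⁻¹ * A.trace).re
      map_add' := fun A B => by
        simp only [Matrix.trace_add, mul_add, Complex.add_re]
      map_smul' := fun r A => by
        simp only [Matrix.trace_smul, RingHom.id_apply]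
        rw [Complex.real_smul, mul_left_comm, Complex.re_ofReal_mul]
        simp }

@[simp] lemma trRe2_apply (A : M2) : trRe2 A = ((2 : ℂ)⁻¹ * A.trace).re := rfl

lemma frob_norm_sq (X : M2) : ‖X‖ ^ 2 = ∑ i, ∑ j, ‖X i j‖ ^ 2 := by
  rw [Matrix.frobenius_norm_def]
  rw [← Real.rpow_natCast ((∑ i, ∑ j, ‖X i j‖ ^ (2:ℝ)) ^ (1/2 : ℝ)) 2,
    ← Real.rpow_mul (by positivity)]
  norm_num

lemma frob_tr_sq (X : M2) : ((X * Xᴴ).trace).re = ‖X‖ ^ 2 := by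
  rw [frob_norm_sq, Matrix.trace]
  simp only [Matrix.diag_apply, Matrix.mul_apply, Matrix.conjTranspose_apply]
  rw [Complex.re_sum]
  refine Finset.sum_congr rfl fun i _ => ?_
  rw [Complex.re_sum]
  refine Finset.sum_congr rfl fun j _ => ?_
  rw [Complex.star_def, Complex.mul_conj]
  simp [Complex.normSq_eq_norm_sq]
  norm_cast

lemma frob_cs (X Y : M2) : ((X * Yᴴ).trace).re ≤ ‖X‖ * ‖Y‖ := by
  have h1 : ((X * Yᴴ).trace).re ≤ ∑ i, ∑ j, ‖X i j‖ * ‖Y i j‖ := by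
    rw [Matrix.trace]
    simp only [Matrix.diag_apply, Matrix.mul_apply, Matrix.conjTranspose_apply]
    rw [Complex.re_sum]
    refine Finset.sum_le_sum fun i _ => ?_
    rw [Complex.re_sum]
    refine Finset.sum_le_sum fun j _ => ?_
    calc (X i j * (starRingEnd ℂ) (Y i j)).re ≤ ‖X i j * (starRingEnd ℂ) (Y i j)‖ :=
          Complex.re_le_norm _
      _ = ‖X i j‖ * ‖Y i j‖ := by simp [_root_.map_mul]
  refine h1.trans ?_
  have h2 : (∑ i, ∑ j, ‖X i j‖ * ‖Y i j‖) ^ 2 ≤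
      (∑ i, ∑ j, ‖X i j‖ ^ 2) * (∑ i, ∑ j, ‖Y i j‖ ^ 2) := by
    have := Finset.sum_mul_sq_le_sq_mul_sq Finset.univ
      (fun p : Fin 2 × Fin 2 => ‖X p.1 p.2‖) (fun p => ‖Y p.1 p.2‖)
    simpa [← Finset.sum_product', Fintype.sum_prod_type] using this
  have hx : 0 ≤ ∑ i, ∑ j, ‖X i j‖ * ‖Y i j‖ := by positivity
  have := Real.sqrt_le_sqrt h2
  rw [Real.sqrt_sq hx] at this
  refine this.trans ?_
  rw [← frob_norm_sq, ← frob_norm_sq, Real.sqrt_mul (by positivity), Real.sqrt_sq (norm_nonneg _),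
    Real.sqrt_sq (norm_nonneg _)]

set_option maxHeartbeats 1000000 in
/-- master geometric lemma at a fixed point H ∈ 𝒟 -/
lemma hNorm_master {H : M2} (hdet : H.det = 1) (hpd : H.PosDef) :
    (∀ x y : M2, ((x * H * yᴴ * H⁻¹).trace).re ≤ 2 * hNorm H x * hNorm H y)
  ∧ (∀ x y : M2, hNorm H (x + y) ≤ hNorm H x + hNorm H y)
  ∧ (∀ x y : M2, hNorm H (x * y - y * x) ≤ 2 * Real.sqrt 2 * hNorm H x * hNorm H y)
  ∧ (∀ x : M2, hNorm H x ^ 2 = ((2:ℂ)⁻¹ * (x * H * xᴴ * H⁻¹).trace).re)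
  ∧ (∀ x : M2, hNorm H ((2:ℂ)⁻¹ • x) = 2⁻¹ * hNorm H x) := by
  obtain ⟨g, hg2, hgH⟩ : ∃ g : M2, g * g = H ∧ gᴴ = g := by
    open scoped MatrixOrder in
    exact ⟨CFC.sqrt H, CFC.sqrt_mul_sqrt_self H hpd.posSemidef.nonneg,
      (CFC.sqrt_nonneg H).posSemidef.1⟩
  have hgu : IsUnit g.det := by
    have : g.det * g.det = 1 := by
      rw [← Matrix.det_mul, hg2, hdet]
    exact IsUnit.of_mul_eq_one _ this
  have hginv : g * g⁻¹ = 1 := Matrix.mul_nonsing_inv _ hgu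
  have hinvg : g⁻¹ * g = 1 := Matrix.nonsing_inv_mul _ hgu
  have hginvH : (g⁻¹)ᴴ = g⁻¹ := by rw [Matrix.conjTranspose_nonsing_inv, hgH]
  have hHinv : H⁻¹ = g⁻¹ * g⁻¹ := by rw [← hg2, Matrix.mul_inv_rev]
  set Φ : M2 → M2 := fun x => g⁻¹ * x * g with hΦ
  have hΦadd : ∀ x y, Φ (x + y) = Φ x + Φ y := fun x y => by
    simp only [hΦ, Matrix.mul_add, Matrix.add_mul]
  have hΦsub : ∀ x y, Φ (x - y) = Φ x - Φ y := fun x y => by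
    simp only [hΦ, Matrix.mul_sub, Matrix.sub_mul]
  have hΦmul : ∀ x y, Φ (x * y) = Φ x * Φ y := fun x y => by
    simp only [hΦ]
    calc g⁻¹ * (x * y) * g = g⁻¹ * x * (g * g⁻¹) * y * g := by
          rw [hginv]; noncomm_ring
      _ = g⁻¹ * x * g * (g⁻¹ * y * g) := by noncomm_ring
  have hconj : ∀ x y : M2, (x * H * yᴴ * H⁻¹).trace = (Φ x * (Φ y)ᴴ).trace := by
    intro x y
    have h1 : (Φ y)ᴴ = g * yᴴ * g⁻¹ := by
      simp only [hΦ, Matrix.conjTranspose_mul, hgH, hginvH, Matrix.mul_assoc]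
    calc (x * H * yᴴ * H⁻¹).trace
        = ((x * H * yᴴ * g⁻¹) * g⁻¹).trace := by rw [hHinv, ← Matrix.mul_assoc]
      _ = (g⁻¹ * (x * H * yᴴ * g⁻¹)).trace := Matrix.trace_mul_comm _ _
      _ = (Φ x * (Φ y)ᴴ).trace := by
          rw [h1, hΦ, ← hg2]
          congr 1
          noncomm_ring
  have hsq : ∀ x : M2, ((2:ℂ)⁻¹ * (x * H * xᴴ * H⁻¹).trace).re = 2⁻¹ * ‖Φ x‖ ^ 2 := by
    intro x
    have : ((2 : ℂ))⁻¹ = ((2⁻¹ : ℝ) : ℂ) := by norm_num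
    rw [this, Complex.re_ofReal_mul, hconj, frob_tr_sq]
  have hrep : ∀ x : M2, hNorm H x = ‖Φ x‖ / Real.sqrt 2 := by
    intro x
    rw [hNorm, hsq]
    rw [show (2⁻¹ : ℝ) * ‖Φ x‖ ^ 2 = (‖Φ x‖ / Real.sqrt 2) ^ 2 by
      rw [div_pow, Real.sq_sqrt (by norm_num : (0:ℝ) ≤ 2)]; ring]
    exact Real.sqrt_sq (by positivity)
  have s2pos : (0:ℝ) < Real.sqrt 2 := by positivity
  have s2sq : Real.sqrt 2 * Real.sqrt 2 = 2 := Real.mul_self_sqrt (by norm_num)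
  refine ⟨?_, ?_, ?_, ?_, ?_⟩
  · intro x y
    rw [hconj]
    refine (frob_cs _ _).trans ?_
    rw [hrep, hrep, show (2:ℝ) * (‖Φ x‖ / Real.sqrt 2) * (‖Φ y‖ / Real.sqrt 2) =
      2 * (‖Φ x‖ * ‖Φ y‖) / (Real.sqrt 2 * Real.sqrt 2) by ring, s2sq]
    rw [mul_div_assoc]
    nlinarith [norm_nonneg (Φ x), norm_nonneg (Φ y)]
  · intro x y
    rw [hrep, hrep, hrep, hΦadd, ← add_div]
    gcongr
    exact norm_add_le _ _
  · intro x y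
    rw [hrep, hrep, hrep]
    have h1 : Φ (x * y - y * x) = Φ x * Φ y - Φ y * Φ x := by
      rw [hΦsub, hΦmul, hΦmul]
    rw [h1]
    have h5 : ‖Φ x * Φ y - Φ y * Φ x‖ ≤ 2 * ‖Φ x‖ * ‖Φ y‖ := by
      refine (norm_sub_le _ _).trans ?_
      have := norm_mul_le (Φ x) (Φ y)
      have := norm_mul_le (Φ y) (Φ x)
      nlinarith [norm_nonneg (Φ x), norm_nonneg (Φ y)]
    rw [div_le_iff₀ s2pos]
    calc ‖Φ x * Φ y - Φ y * Φ x‖ ≤ 2 * ‖Φ x‖ * ‖Φ y‖ := h5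
      _ = 2 * Real.sqrt 2 * (‖Φ x‖ / Real.sqrt 2) * (‖Φ y‖ / Real.sqrt 2) * Real.sqrt 2 := by
          rw [show (2:ℝ) * Real.sqrt 2 * (‖Φ x‖ / Real.sqrt 2) * (‖Φ y‖ / Real.sqrt 2) *
            Real.sqrt 2 = 2 * (‖Φ x‖ * ‖Φ y‖) * (Real.sqrt 2 * Real.sqrt 2) /
            (Real.sqrt 2 * Real.sqrt 2) by ring, mul_div_assoc,
            div_self (by positivity : Real.sqrt 2 * Real.sqrt 2 ≠ 0)]
          ring
  · intro x
    rw [hrep, hsq, div_pow, Real.sq_sqrt (by norm_num : (0:ℝ) ≤ 2)]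
    ring
  · intro x
    rw [hrep, hrep]
    have : Φ ((2:ℂ)⁻¹ • x) = (2:ℂ)⁻¹ • Φ x := by
      simp only [hΦ, Matrix.mul_smul, Matrix.smul_mul]
    rw [this, norm_smul]
    simp only [norm_inv, Complex.norm_ofNat]
    ring

lemma tc (a b : M2) : (a * b).trace = (b * a).trace := Matrix.trace_mul_comm a b

set_option maxHeartbeats 1000000 in
lemma key_deriv (H Hd w Z : M2) (hH : H * H⁻¹ = 1) (hH' : H⁻¹ * H = 1)
    (hHh : Hᴴ = H) (hIh : H⁻¹ᴴ = H⁻¹) (hHdh : Hdᴴ = Hd) :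
    ((2:ℂ)⁻¹ * (((((2:ℂ)⁻¹ • (Hd * H⁻¹ * w - w * (Hd * H⁻¹)) + Z) * H + w * Hd) * wᴴ
        + (w * H) * ((2:ℂ)⁻¹ • (Hd * H⁻¹ * w - w * (Hd * H⁻¹)) + Z)ᴴ) * H⁻¹
        + (w * H * wᴴ) * (-(H⁻¹ * Hd * H⁻¹))).trace).re
      = ((Z * H * wᴴ * H⁻¹).trace).re := by
  have hPt : ((2:ℂ)⁻¹ • (Hd * H⁻¹ * w - w * (Hd * H⁻¹)))ᴴ
      = (2:ℂ)⁻¹ • (wᴴ * (H⁻¹ * Hd) - (H⁻¹ * Hd) * wᴴ) := by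
    simp [Matrix.conjTranspose_smul, Matrix.conjTranspose_sub, Matrix.conjTranspose_mul,
      hHh, hIh, hHdh, Matrix.mul_assoc]
  have e1 : ∀ X : M2, H⁻¹ * (H * X) = X := fun X => by
    rw [← Matrix.mul_assoc, hH', Matrix.one_mul]
  have e2 : ∀ X : M2, H * (H⁻¹ * X) = X := fun X => by
    rw [← Matrix.mul_assoc, hH, Matrix.one_mul]
  have hcyc : (Hd * (H⁻¹ * (w * (H * (wᴴ * H⁻¹))))).trace
      = (w * (H * (wᴴ * (H⁻¹ * (Hd * H⁻¹))))).trace := by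
    rw [show Hd * (H⁻¹ * (w * (H * (wᴴ * H⁻¹)))) = (Hd * H⁻¹) * (w * (H * (wᴴ * H⁻¹))) by
      rw [Matrix.mul_assoc], tc]
    congr 1
    noncomm_ring
  have hstar : (w * (H * (Zᴴ * H⁻¹))).trace = star ((Z * (H * (wᴴ * H⁻¹))).trace) := by
    rw [← Matrix.trace_conjTranspose]
    have h1 : (Z * (H * (wᴴ * H⁻¹)))ᴴ = H⁻¹ * (w * (H * Zᴴ)) := by
      simp [Matrix.conjTranspose_mul, hHh, hIh, Matrix.mul_assoc]
    rw [h1, tc (H⁻¹) (w * (H * Zᴴ))]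
    congr 1
    noncomm_ring
  have main : (((((2:ℂ)⁻¹ • (Hd * H⁻¹ * w - w * (Hd * H⁻¹)) + Z) * H + w * Hd) * wᴴ
        + (w * H) * ((2:ℂ)⁻¹ • (Hd * H⁻¹ * w - w * (Hd * H⁻¹)) + Z)ᴴ) * H⁻¹
        + (w * H * wᴴ) * (-(H⁻¹ * Hd * H⁻¹))).trace
      = (Z * (H * (wᴴ * H⁻¹))).trace + star ((Z * (H * (wᴴ * H⁻¹))).trace) := by
    rw [← hstar]
    simp only [Matrix.conjTranspose_add, Matrix.conjTranspose_smul, Matrix.conjTranspose_sub,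
      Matrix.conjTranspose_mul, hHh, hIh, hHdh, Matrix.add_mul, Matrix.mul_add, Matrix.sub_mul,
      Matrix.mul_sub, Matrix.smul_mul, Matrix.mul_smul, Matrix.mul_assoc, Matrix.mul_neg,
      Matrix.neg_mul, Matrix.trace_add, Matrix.trace_sub, Matrix.trace_smul, Matrix.trace_neg,
      e1, e2]
    rw [hcyc]
    simp only [star_div₀, star_inv₀, star_one, star_ofNat, smul_eq_mul]
    ring
  rw [main]
  have hassoc : ((Z * H * wᴴ * H⁻¹).trace) = ((Z * (H * (wᴴ * H⁻¹))).trace) := by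
    rw [Matrix.mul_assoc, Matrix.mul_assoc]
  rw [hassoc]
  set z := (Z * (H * (wᴴ * H⁻¹))).trace
  have h2 : ((2 : ℂ))⁻¹ = ((2⁻¹ : ℝ) : ℂ) := by norm_num
  rw [h2, Complex.re_ofReal_mul]
  simp only [Complex.add_re, Complex.star_def, Complex.conj_re]
  ring

end Stmt9Aux
set_option maxHeartbeats 4000000 in
/-- Parallel translation for `C¹`-close curves in `ℍ³`: if `c, c₀` are `C¹` curves in
the matrix model of `ℍ³` with unit parallel vector fields `v, v₀` along them, and
`‖ċ c⁻¹ - ċ₀ c₀⁻¹‖_{c₀(t)} < ε ≤ 1/(4L)` on `[0, L]`, then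
`‖v(t) - v₀(t)‖_{c₀(t)} ≤ 2 ‖v(0) - v₀(0)‖_{c₀(0)} + 4 L ε` on `[0, L]`. -/
theorem stmt_9 (L ε : ℝ) (hL : 0 < L) (hε0 : 0 < ε) (hε : ε ≤ 1 / (4 * L))
    (c c₀ v v₀ : ℝ → Matrix (Fin 2) (Fin 2) ℂ)
    (hc : ∀ t ∈ Set.Icc (0 : ℝ) L, memD (c t))
    (hc₀ : ∀ t ∈ Set.Icc (0 : ℝ) L, memD (c₀ t))
    (hdc : Differentiable ℝ c) (hdc₀ : Differentiable ℝ c₀)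
    -- `v` is parallel along `c`:  `v̇ = ½ [ċ c⁻¹, v]`
    (hv : ∀ t ∈ Set.Icc (0 : ℝ) L,
      HasDerivAt v ((2 : ℂ)⁻¹ • ⁅deriv c t * (c t)⁻¹, v t⁆) t)
    (hv₀ : ∀ t ∈ Set.Icc (0 : ℝ) L,
      HasDerivAt v₀ ((2 : ℂ)⁻¹ • ⁅deriv c₀ t * (c₀ t)⁻¹, v₀ t⁆) t)
    -- `v` and `v₀` are unit vector fields
    (hunit : ∀ t ∈ Set.Icc (0 : ℝ) L, hNorm (c t) (v t) = 1)
    (hunit₀ : ∀ t ∈ Set.Icc (0 : ℝ) L, hNorm (c₀ t) (v₀ t) = 1)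
    -- the curves are `C¹ε`-close
    (hclose : ∀ t ∈ Set.Icc (0 : ℝ) L,
      hNorm (c₀ t) (deriv c t * (c t)⁻¹ - deriv c₀ t * (c₀ t)⁻¹) < ε) :
    ∀ t ∈ Set.Icc (0 : ℝ) L,
      hNorm (c₀ t) (v t - v₀ t) ≤ 2 * hNorm (c₀ 0) (v 0 - v₀ 0) + 4 * L * ε := by
  classical
  open Stmt9Aux in
  set I : Set ℝ := Set.Icc (0 : ℝ) L with hI
  set w : ℝ → M2 := fun s => v s - v₀ s with hwdef
  set φ : ℝ → ℝ := fun s => trRe2 (w s * c₀ s * (w s)ᴴ * (c₀ s)⁻¹) with hφdef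
  set ZM : ℝ → M2 := fun s => (2:ℂ)⁻¹ •
    ((deriv c s * (c s)⁻¹ - deriv c₀ s * (c₀ s)⁻¹) * v s
      - v s * (deriv c s * (c s)⁻¹ - deriv c₀ s * (c₀ s)⁻¹)) with hZMdef
  set D : ℝ → ℝ := fun s => ((ZM s * c₀ s * (w s)ᴴ * (c₀ s)⁻¹).trace).re with hDdef
  have hud : UniqueDiffOn ℝ I := uniqueDiffOn_Icc hL
  -- basic facts at each point of I
  have hdet1 : ∀ t ∈ I, (c₀ t).det = 1 := fun t ht => (hc₀ t ht).2.1
  have hu : ∀ t ∈ I, IsUnit (c₀ t).det := fun t ht => by rw [hdet1 t ht]; exact isUnit_one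
  have hHinv : ∀ t ∈ I, c₀ t * (c₀ t)⁻¹ = 1 := fun t ht => Matrix.mul_nonsing_inv _ (hu t ht)
  have hinvH : ∀ t ∈ I, (c₀ t)⁻¹ * c₀ t = 1 := fun t ht => Matrix.nonsing_inv_mul _ (hu t ht)
  have hHh : ∀ t ∈ I, (c₀ t)ᴴ = c₀ t := fun t ht => (hc₀ t ht).1
  have hIh : ∀ t ∈ I, ((c₀ t)⁻¹)ᴴ = (c₀ t)⁻¹ := fun t ht => by
    rw [Matrix.conjTranspose_nonsing_inv, hHh t ht]
  have hc₀d : ∀ t : ℝ, HasDerivAt c₀ (deriv c₀ t) t := fun t => (hdc₀ t).hasDerivAt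
  -- derivative of conjTranspose of c₀
  have hctc₀ : ∀ t : ℝ, HasDerivAt (fun s => (c₀ s)ᴴ) ((deriv c₀ t)ᴴ) t := fun t => by
    have := ctCLM.hasFDerivAt.comp_hasDerivAt t (hc₀d t)
    exact this
  -- deriv c₀ is Hermitian on I
  have hHdh : ∀ t ∈ I, (deriv c₀ t)ᴴ = deriv c₀ t := by
    intro t ht
    have h1 : HasDerivWithinAt c₀ ((deriv c₀ t)ᴴ) I t := by
      refine ((hctc₀ t).hasDerivWithinAt).congr (fun s hs => (hHh s hs).symm) (hHh t ht).symm
        |>.congr (fun s hs => rfl) rfl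
    exact (hud t ht).eq_deriv _ h1 (hc₀d t).hasDerivWithinAt
  -- derivative of the inverse of c₀ within I
  have hinv_eq : ∀ s ∈ I, (c₀ s)⁻¹ = adjCLM (c₀ s) := by
    intro s hs
    rw [Matrix.inv_def, hdet1 s hs, Ring.inverse_one, one_smul, adjCLM_eq]
  have hinvd : ∀ t ∈ I, HasDerivWithinAt (fun s => (c₀ s)⁻¹) (adjCLM (deriv c₀ t)) I t := by
    intro t ht
    have h1 : HasDerivAt (fun s => adjCLM (c₀ s)) (adjCLM (deriv c₀ t)) t :=
      adjCLM.hasFDerivAt.comp_hasDerivAt t (hc₀d t)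
    exact h1.hasDerivWithinAt.congr hinv_eq (hinv_eq t ht)
  -- identify the derivative of the inverse
  have hDinv : ∀ t ∈ I, adjCLM (deriv c₀ t) = -((c₀ t)⁻¹ * deriv c₀ t * (c₀ t)⁻¹) := by
    intro t ht
    have hprod : HasDerivWithinAt (fun s => c₀ s * (c₀ s)⁻¹)
        (deriv c₀ t * (c₀ t)⁻¹ + c₀ t * adjCLM (deriv c₀ t)) I t :=
      (hc₀d t).hasDerivWithinAt.mul (hinvd t ht)
    have hone : HasDerivWithinAt (fun s => c₀ s * (c₀ s)⁻¹) 0 I t :=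
      (hasDerivWithinAt_const t I (1 : M2)).congr (fun s hs => hHinv s hs) (hHinv t ht)
    have h0 : deriv c₀ t * (c₀ t)⁻¹ + c₀ t * adjCLM (deriv c₀ t) = 0 :=
      (hud t ht).eq_deriv _ hprod hone
    have h1 : c₀ t * adjCLM (deriv c₀ t) = -(deriv c₀ t * (c₀ t)⁻¹) := by
      linear_combination (norm := abel) h0
    have h2 : (c₀ t)⁻¹ * (c₀ t * adjCLM (deriv c₀ t)) = adjCLM (deriv c₀ t) := by
      rw [← Matrix.mul_assoc, hinvH t ht, Matrix.one_mul]
    rw [h1] at h2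
    rw [← h2, Matrix.mul_neg, Matrix.mul_assoc]
  -- derivative of w
  have hwd : ∀ t ∈ I, HasDerivAt w
      ((2:ℂ)⁻¹ • (deriv c₀ t * (c₀ t)⁻¹ * w t - w t * (deriv c₀ t * (c₀ t)⁻¹)) + ZM t) t := by
    intro t ht
    have h1 := (hv t ht).sub (hv₀ t ht)
    have h2 : (2 : ℂ)⁻¹ • ⁅deriv c t * (c t)⁻¹, v t⁆ - (2 : ℂ)⁻¹ • ⁅deriv c₀ t * (c₀ t)⁻¹, v₀ t⁆
        = (2:ℂ)⁻¹ • (deriv c₀ t * (c₀ t)⁻¹ * w t - w t * (deriv c₀ t * (c₀ t)⁻¹)) + ZM t := by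
      rw [hZMdef, hwdef]
      simp only [Ring.lie_def, ← smul_sub, ← smul_add]
      congr 1
      noncomm_ring
    rw [← h2]
    exact h1
  -- derivative of φ within I
  have hφd : ∀ t ∈ I, HasDerivWithinAt φ (D t) I t := by
    intro t ht
    set Hd := deriv c₀ t
    set wt' := (2:ℂ)⁻¹ • (Hd * (c₀ t)⁻¹ * w t - w t * (Hd * (c₀ t)⁻¹)) + ZM t with hwt'
    have m1 : HasDerivWithinAt (fun s => w s * c₀ s)
        (wt' * c₀ t + w t * Hd) I t :=
      (hwd t ht).hasDerivWithinAt.mul (hc₀d t).hasDerivWithinAt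
    have hctw : HasDerivAt (fun s => (w s)ᴴ) (wt'ᴴ) t := by
      have h := ctCLM.hasFDerivAt.comp_hasDerivAt t (hwd t ht)
      rw [← hwt'] at h
      exact h
    have m2 : HasDerivWithinAt (fun s => w s * c₀ s * (w s)ᴴ)
        ((wt' * c₀ t + w t * Hd) * (w t)ᴴ + (w t * c₀ t) * wt'ᴴ) I t :=
      m1.mul hctw.hasDerivWithinAt
    have m3 : HasDerivWithinAt (fun s => w s * c₀ s * (w s)ᴴ * (c₀ s)⁻¹)
        (((wt' * c₀ t + w t * Hd) * (w t)ᴴ + (w t * c₀ t) * wt'ᴴ) * (c₀ t)⁻¹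
          + (w t * c₀ t * (w t)ᴴ) * adjCLM Hd) I t :=
      m2.mul (hinvd t ht)
    have m4 := trRe2.hasFDerivAt.comp_hasDerivWithinAt t m3
    have hval : trRe2 (((wt' * c₀ t + w t * Hd) * (w t)ᴴ + (w t * c₀ t) * wt'ᴴ) * (c₀ t)⁻¹
          + (w t * c₀ t * (w t)ᴴ) * adjCLM Hd) = D t := by
      rw [hDinv t ht, trRe2_apply, hwt']
      have := key_deriv (c₀ t) Hd (w t) (ZM t) (hHinv t ht) (hinvH t ht)
        (hHh t ht) (hIh t ht) (hHdh t ht)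
      rw [hDdef]
      exact this
    exact hval ▸ m4
  -- φ equals the squared norm on I
  have φeq : ∀ s ∈ I, φ s = hNorm (c₀ s) (w s) ^ 2 := by
    intro s hs
    rw [hφdef]
    simp only [trRe2_apply]
    exact ((hNorm_master (hdet1 s hs) (hc₀ s hs).2.2).2.2.2.1 (w s)).symm
  have hψnn : ∀ s, 0 ≤ hNorm (c₀ s) (w s) := fun s => Real.sqrt_nonneg _
  -- the Gronwall comparison
  set ψ0 := hNorm (c₀ 0) (w 0) with hψ0
  set K := 2 * Real.sqrt 2 * ε with hK
  have hKpos : 0 < K := by positivity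
  have hmain : ∀ δ > 0, ∀ t ∈ I,
      hNorm (c₀ t) (w t) ≤ (ψ0 + δ + 1) * Real.exp (K * t / 2) - 1 := by
    intro δ hδ t ht
    set C := ψ0 + δ + 1 with hC
    have hC1 : 1 < C := by
      have := hψnn 0
      simp only [hC]
      linarith
    set Bf : ℝ → ℝ := fun s => (C * Real.exp (K * s / 2) - 1) ^ 2 with hBf
    set Bf' : ℝ → ℝ := fun s => K * (C * Real.exp (K * s / 2)) * (C * Real.exp (K * s / 2) - 1)
      with hBf'
    have hB : ∀ x, HasDerivAt Bf (Bf' x) x := by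
      intro x
      have h1 : HasDerivAt (fun s : ℝ => K * s / 2) (K / 2) x := by
        simpa using ((hasDerivAt_id x).const_mul K).div_const 2
      have h2 : HasDerivAt (fun s => C * Real.exp (K * s / 2) - 1)
          (C * (Real.exp (K * x / 2) * (K / 2))) x :=
        ((h1.exp).const_mul C).sub_const 1
      have h3 := h2.pow 2
      refine h3.congr_deriv ?_
      simp only [hBf']
      ring
    have hcont : ContinuousOn φ I :=
      fun s hs => (hφd s hs).continuousWithinAt
    have hf' : ∀ x ∈ Set.Ico (0:ℝ) L, HasDerivWithinAt φ (D x) (Set.Ici x) x := by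
      intro x hx
      exact (hφd x ⟨hx.1, le_of_lt hx.2⟩).mono_of_mem_nhdsWithin (Icc_mem_nhdsGE_of_mem hx)
    have ha : φ 0 ≤ Bf 0 := by
      rw [φeq 0 ⟨le_refl 0, le_of_lt hL⟩]
      simp only [hBf, mul_zero, zero_div, Real.exp_zero, mul_one]
      have := hψnn 0
      nlinarith
    have bound : ∀ x ∈ Set.Ico (0:ℝ) L, φ x = Bf x → D x < Bf' x := by
      intro x hx hfb
      have hxI : x ∈ I := ⟨hx.1, le_of_lt hx.2⟩
      set ψ := hNorm (c₀ x) (w x) with hψ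
      have hφx : φ x = ψ ^ 2 := φeq x hxI
      set q := C * Real.exp (K * x / 2) with hq
      have hq1 : 1 + δ ≤ q := by
        have he : 1 ≤ Real.exp (K * x / 2) := by
          have h0x : (0:ℝ) ≤ x := hx.1
          have : (0:ℝ) ≤ K * x / 2 := by positivity
          exact Real.one_le_exp this
        have := hψnn 0
        rw [hq, hC]
        nlinarith
      have hqδ : 0 < q - 1 := by linarith
      have hψq : ψ = q - 1 := by
        have h1 : ψ ^ 2 = (q - 1) ^ 2 := by rw [← hφx, hfb]
        nlinarith [hψnn x]
      -- bound the derivative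
      have master := hNorm_master (hdet1 x hxI) (hc₀ x hxI).2.2
      have h1 : D x ≤ 2 * hNorm (c₀ x) (ZM x) * ψ := master.1 (ZM x) (w x)
      have h2 : hNorm (c₀ x) (ZM x) ≤ Real.sqrt 2 * (hNorm (c₀ x)
          (deriv c x * (c x)⁻¹ - deriv c₀ x * (c₀ x)⁻¹)) * hNorm (c₀ x) (v x) := by
        rw [hZMdef]
        rw [master.2.2.2.2]
        have h3 := master.2.2.1 (deriv c x * (c x)⁻¹ - deriv c₀ x * (c₀ x)⁻¹) (v x)
        nlinarith [hclose x hxI, hε0]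
      have h4 : hNorm (c₀ x) (v x) ≤ ψ + 1 := by
        have : v x = w x + v₀ x := by
          show v x = (v x - v₀ x) + v₀ x
          abel
        rw [this]
        calc hNorm (c₀ x) (w x + v₀ x) ≤ hNorm (c₀ x) (w x) + hNorm (c₀ x) (v₀ x) :=
              master.2.1 _ _
          _ = ψ + 1 := by rw [hunit₀ x hxI]
      have hZnn : 0 ≤ hNorm (c₀ x) (ZM x) := Real.sqrt_nonneg _
      have hvnn : 0 ≤ hNorm (c₀ x) (v x) := Real.sqrt_nonneg _
      have hBx : hNorm (c₀ x) (deriv c x * (c x)⁻¹ - deriv c₀ x * (c₀ x)⁻¹) < ε :=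
        hclose x hxI
      have hBnn : 0 ≤ hNorm (c₀ x) (deriv c x * (c x)⁻¹ - deriv c₀ x * (c₀ x)⁻¹) :=
        Real.sqrt_nonneg _
      have hψpos : 0 < ψ := by rw [hψq]; exact hqδ
      have hs2 : 0 < Real.sqrt 2 := by positivity
      have hqψ : q = ψ + 1 := by rw [hψq]; ring
      have e1 : hNorm (c₀ x) (ZM x) * ψ ≤ Real.sqrt 2 *
          hNorm (c₀ x) (deriv c x * (c x)⁻¹ - deriv c₀ x * (c₀ x)⁻¹) * hNorm (c₀ x) (v x) * ψ :=
        mul_le_mul_of_nonneg_right h2 hψpos.le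
      have e2 : Real.sqrt 2 * hNorm (c₀ x) (deriv c x * (c x)⁻¹ - deriv c₀ x * (c₀ x)⁻¹) *
          hNorm (c₀ x) (v x) ≤ Real.sqrt 2 *
          hNorm (c₀ x) (deriv c x * (c x)⁻¹ - deriv c₀ x * (c₀ x)⁻¹) * (ψ + 1) :=
        mul_le_mul_of_nonneg_left h4 (by positivity)
      have e3 : Real.sqrt 2 * hNorm (c₀ x) (deriv c x * (c x)⁻¹ - deriv c₀ x * (c₀ x)⁻¹) *
          (ψ + 1) < Real.sqrt 2 * ε * (ψ + 1) := by
        have hp : (0:ℝ) < ψ + 1 := by linarith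
        have := mul_lt_mul_of_pos_right (mul_lt_mul_of_pos_left hBx hs2) hp
        exact this
      have e4 : Real.sqrt 2 * hNorm (c₀ x) (deriv c x * (c x)⁻¹ - deriv c₀ x * (c₀ x)⁻¹) *
          hNorm (c₀ x) (v x) * ψ ≤ Real.sqrt 2 *
          hNorm (c₀ x) (deriv c x * (c x)⁻¹ - deriv c₀ x * (c₀ x)⁻¹) * (ψ + 1) * ψ :=
        mul_le_mul_of_nonneg_right e2 hψpos.le
      have e5 : Real.sqrt 2 * hNorm (c₀ x) (deriv c x * (c x)⁻¹ - deriv c₀ x * (c₀ x)⁻¹) *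
          (ψ + 1) * ψ < Real.sqrt 2 * ε * (ψ + 1) * ψ :=
        mul_lt_mul_of_pos_right e3 hψpos
      calc D x ≤ 2 * hNorm (c₀ x) (ZM x) * ψ := h1
        _ < K * q * (q - 1) := by
            rw [hK, ← hψq, hqψ]
            nlinarith [e1, e4, e5]
        _ = Bf' x := by rw [hBf']
    have := image_le_of_deriv_right_lt_deriv_boundary hcont hf' ha hB bound
    have hφt := this ht
    rw [φeq t ht] at hφt
    simp only [hBf] at hφt
    have hq1 : (0:ℝ) < C * Real.exp (K * t / 2) - 1 := by
      have he : 1 ≤ Real.exp (K * t / 2) := by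
        have h0t : (0:ℝ) ≤ t := ht.1
        have : (0:ℝ) ≤ K * t / 2 := by positivity
        exact Real.one_le_exp this
      nlinarith
    nlinarith [hψnn t, hφt]
  -- conclude
  intro t ht
  set E : ℝ := Real.exp (K * L / 2) with hE
  have hEpos : 0 < E := Real.exp_pos _
  have hstep : ∀ δ > 0, hNorm (c₀ t) (w t) ≤ (ψ0 + δ + 1) * E - 1 := by
    intro δ hδ
    refine (hmain δ hδ t ht).trans ?_
    have hee : Real.exp (K * t / 2) ≤ E := by
      rw [hE]
      apply Real.exp_le_exp.mpr
      have := ht.2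
      have hKnn : 0 ≤ K := le_of_lt hKpos
      nlinarith
    have hCnn : 0 ≤ ψ0 + δ + 1 := by
      have := hψnn 0
      nlinarith
    nlinarith
  have hlim : hNorm (c₀ t) (w t) ≤ (ψ0 + 1) * E - 1 := by
    refine le_of_forall_pos_le_add fun δ' hδ' => ?_
    have h1 := hstep (δ' / E) (by positivity)
    have h2 : (ψ0 + δ' / E + 1) * E - 1 = (ψ0 + 1) * E - 1 + δ' := by
      field_simp
      ring
    linarith [h1, h2.le]
  refine hlim.trans ?_
  -- final arithmetic
  set x : ℝ := Real.sqrt 2 * ε * L with hx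
  have hKL : K * L / 2 = x := by rw [hK, hx]; ring
  rw [hKL] at hE
  have hεL : 4 * L * ε ≤ 1 := by
    have := (le_div_iff₀ (by positivity : (0:ℝ) < 4 * L)).mp hε
    linarith
  have hs2 : Real.sqrt 2 ≤ 1.5 := by
    nlinarith [Real.sq_sqrt (by norm_num : (0:ℝ) ≤ 2), Real.sqrt_nonneg 2]
  have hs2nn : 0 ≤ Real.sqrt 2 := Real.sqrt_nonneg 2
  have hx0 : 0 ≤ x := by positivity
  have hxhalf : x ≤ 1/2 := by rw [hx]; nlinarith
  have hEx : E * (1 - x) ≤ 1 := by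
    have h1 : -x + 1 ≤ Real.exp (-x) := Real.add_one_le_exp (-x)
    have h2 : Real.exp (-x) = E⁻¹ := by rw [hE, Real.exp_neg]
    rw [h2] at h1
    have h3 : E * (-x + 1) ≤ E * E⁻¹ := by
      apply mul_le_mul_of_nonneg_left h1 (le_of_lt hEpos)
    rw [mul_inv_cancel₀ (ne_of_gt hEpos)] at h3
    linarith
  have hE2 : E ≤ 2 := by nlinarith
  have hE1 : E - 1 ≤ 2 * x := by nlinarith
  have h2x : 2 * x ≤ 4 * L * ε := by
    rw [hx]
    nlinarith [hε0, hL]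
  have hψ0nn : 0 ≤ ψ0 := hψnn 0
  nlinarith [mul_nonneg (by linarith : (0:ℝ) ≤ 2 - E) hψ0nn]
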